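/- For every natural number n, the number of permutations π of {1,…,n} that are involutions and avoid the pattern 321 equals the binomial coefficient C(n, ⌊n/2⌋). -/

import Mathlib

/-- A permutation of `Fin n` avoids the pattern 321 if there are no indices
`i < j < k` with `π i > π j > π k`. -/
def Avoids321 {n : ℕ} (π : Equiv.Perm (Fin n)) : Prop :=
  ¬ ∃ i j k : Fin n, i < j ∧ j < k ∧ π k < π j ∧ π j < π i

/-- A permutation is an involution if it is its own inverse pointwise. -/
def IsInvolution {n : ℕ} (π : Equiv.Perm (Fin n)) : Prop :=
  ∀ i, π (π i) = i

/-- A finset of `Fin n` consists of consecutive integers iff it is order-convex. -/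
def IsConsecutive {n : ℕ} (I : Finset (Fin n)) : Prop :=
  ∀ x ∈ I, ∀ y ∈ I, ∀ z : Fin n, x ≤ z → z ≤ y → z ∈ I

/-- A permutation is simple if every interval (a set of consecutive integers whose
image is also a set of consecutive integers) has cardinality at most 1 or `n`. -/
def IsSimplePerm {n : ℕ} (π : Equiv.Perm (Fin n)) : Prop :=
  ∀ I : Finset (Fin n), IsConsecutive I → IsConsecutive (I.image π) →
    I.card ≤ 1 ∨ I.card = n

/-- A permutation of `{1,…,n}` (here 0-indexed on `Fin n`) is sum-decomposable
(of type 12) if it maps some proper nonempty initial segment onto itself. -/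
def SumDecomposable {n : ℕ} (π : Equiv.Perm (Fin n)) : Prop :=
  ∃ k : ℕ, 1 ≤ k ∧ k < n ∧
    (π : Fin n → Fin n) '' {i : Fin n | (i : ℕ) < k} = {i : Fin n | (i : ℕ) < k}

/-- A permutation is skew-decomposable (of type 21) if it maps some proper nonempty
initial segment onto the corresponding final segment. -/
def SkewDecomposable {n : ℕ} (π : Equiv.Perm (Fin n)) : Prop :=
  ∃ k : ℕ, 1 ≤ k ∧ k < n ∧
    (π : Fin n → Fin n) '' {i : Fin n | (i : ℕ) < k} = {i : Fin n | n - k ≤ (i : ℕ)}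


open Finset
open Finset

/-- prefix count of a finset of `Fin n` -/
def pcnt {n : ℕ} (B : Finset (Fin n)) (m : ℕ) : ℕ :=
  (B.filter (fun i : Fin n => (i : ℕ) < m)).card

/-- ballot condition -/
def Ballot {n : ℕ} (B : Finset (Fin n)) : Prop :=
  ∀ m, m ≤ n → m ≤ 2 * pcnt B m

instance {n : ℕ} : DecidablePred (Ballot (n := n)) := fun B => by
  unfold Ballot pcnt; infer_instance

lemma card_filter_val_lt {n m : ℕ} (hm : m ≤ n) :
    ((univ : Finset (Fin n)).filter (fun i : Fin n => (i : ℕ) < m)).card = m := by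
  rw [Finset.card_bij' (fun (i : Fin n) _ => (i : ℕ))
    (fun (a : ℕ) (ha : a ∈ Finset.range m) => (⟨a, lt_of_lt_of_le (Finset.mem_range.1 ha) hm⟩ : Fin n))]
  rotate_left
  · intro a ha; simp at ha ⊢; exact ha
  · intro a ha; simp at ha ⊢; exact ha
  · intro a ha; simp
  · intro a ha; simp
  · exact Finset.card_range m

lemma pcnt_add_compl {n : ℕ} (B : Finset (Fin n)) {m : ℕ} (hm : m ≤ n) :
    pcnt B m + pcnt Bᶜ m = m := by
  classical
  have key : (B.filter (fun i : Fin n => (i : ℕ) < m)) ∪ (Bᶜ.filter (fun i : Fin n => (i : ℕ) < m))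
      = univ.filter (fun i : Fin n => (i : ℕ) < m) := by
    ext i
    simp only [Finset.mem_union, Finset.mem_filter, Finset.mem_compl, Finset.mem_univ, true_and]
    tauto
  calc pcnt B m + pcnt Bᶜ m
      = ((B.filter (fun i : Fin n => (i : ℕ) < m)) ∪ (Bᶜ.filter (fun i : Fin n => (i : ℕ) < m))).card := by
        rw [Finset.card_union_of_disjoint (Finset.disjoint_filter_filter disjoint_compl_right)]; rfl
    _ = m := by rw [key]; exact card_filter_val_lt hm

lemma pcnt_univ_eq {n : ℕ} (B : Finset (Fin n)) : pcnt B n = B.card := by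
  unfold pcnt
  rw [Finset.filter_true_of_mem]
  intro i _; exact i.isLt

lemma ballot_card {n : ℕ} {B : Finset (Fin n)} (hB : Ballot B) : n ≤ 2 * B.card := by
  have := hB n le_rfl
  rwa [pcnt_univ_eq] at this

/-- the weak excedance set of a permutation -/
def exSet {n : ℕ} (π : Equiv.Perm (Fin n)) : Finset (Fin n) :=
  univ.filter (fun i => i ≤ π i)

lemma ballot_exSet {n : ℕ} {π : Equiv.Perm (Fin n)} (hπ : IsInvolution π) :
    Ballot (exSet π) := by
  intro m hm
  have hadd := pcnt_add_compl (exSet π) hm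
  have hle : pcnt (exSet π)ᶜ m ≤ pcnt (exSet π) m := by
    apply Finset.card_le_card_of_injOn π
    · intro d hd
      simp only [Finset.mem_coe, Finset.mem_filter, Finset.mem_compl, exSet, Finset.mem_univ, true_and,
        not_le] at hd ⊢
      obtain ⟨hdlt, hdm⟩ := hd
      refine ⟨?_, ?_⟩
      · rw [hπ d]; exact le_of_lt hdlt
      · have : (π d : ℕ) < (d : ℕ) := hdlt
        omega
    · intro x _ y _ hxy
      exact π.injective hxy
  omega

lemma exSet_injective {n : ℕ} {π π' : Equiv.Perm (Fin n)}
    (hπ : IsInvolution π) (hπ' : IsInvolution π')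
    (ha : Avoids321 π) (ha' : Avoids321 π')
    (hE : exSet π = exSet π') : π = π' := by
  classical
  have hEiff : ∀ i : Fin n, i ≤ π i ↔ i ≤ π' i := by
    intro i
    have := Finset.ext_iff.1 hE i
    simpa [exSet] using this
  by_contra hne
  set D := univ.filter (fun i : Fin n => π i ≠ π' i) with hD
  have hDne : D.Nonempty := by
    rcases not_forall.1 (fun h => hne (Equiv.ext h)) with ⟨i, hi⟩
    exact ⟨i, by simp [hD, hi]⟩
  set d := D.max' hDne with hd
  have hdD : π d ≠ π' d := by
    have := D.max'_mem hDne
    simpa [hD] using this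
  have hmax : ∀ x : Fin n, d < x → π x = π' x := by
    intro x hx
    by_contra hxx
    have : x ∈ D := by simp [hD, hxx]
    exact absurd (D.le_max' x this) (not_le.2 hx)
  have aux : ∀ (σ σ' : Equiv.Perm (Fin n)), IsInvolution σ → IsInvolution σ' →
      Avoids321 σ → (∀ i : Fin n, i ≤ σ i ↔ i ≤ σ' i) →
      (∀ x : Fin n, d < x → σ x = σ' x) →
      σ d < d → σ' d < d → σ d < σ' d → False := by
    intro σ σ' hσ hσ' haσ hEσ hmaxσ h1 h2 h3
    have hσe : σ (σ d) = d := hσ d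
    have hσ'e' : σ' (σ' d) = d := hσ' d
    have he'B : σ' d ≤ σ (σ' d) := by
      rw [hEσ (σ' d), hσ'e']; exact le_of_lt h2
    rcases eq_or_lt_of_le he'B with heq | hlt
    · refine haσ ⟨σ d, σ' d, d, h3, h2, ?_, ?_⟩
      · rw [← heq]; exact h3
      · rw [← heq, hσe]; exact h2
    · have hσd'' : σ (σ (σ' d)) = σ' d := hσ (σ' d)
      rcases lt_trichotomy d (σ (σ' d)) with hc | hc | hc
      · have h4 := hmaxσ _ hc
        rw [hσd''] at h4
        exact absurd (σ'.injective h4) (ne_of_lt hc)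
      · have : σ d = σ' d := by
          calc σ d = σ (σ (σ' d)) := by rw [← hc]
            _ = σ' d := hσd''
        exact absurd this (ne_of_lt h3)
      · refine haσ ⟨σ d, σ' d, σ (σ' d), h3, hlt, ?_, ?_⟩
        · rw [hσd'']; exact hlt
        · rw [hσe]; exact hc
  rcases le_or_gt d (π d) with hex | hdef
  · have hex' : d ≤ π' d := (hEiff d).1 hex
    rcases eq_or_lt_of_le hex with heq | hlt
    · rcases eq_or_lt_of_le hex' with heq' | hlt'
      · exact hdD (by rw [← heq, ← heq'])
      · have h5 : π' (π' d) = d := hπ' d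
        have h4 := hmax (π' d) hlt'
        rw [h5] at h4
        have h6 := π.injective (h4.trans heq)
        exact absurd h6.symm (ne_of_lt hlt')
    · have h5 : π (π d) = d := hπ d
      have h4 := hmax (π d) hlt
      rw [h5] at h4
      have h6 : π' d = π d := by
        calc π' d = π' (π' (π d)) := by rw [← h4]
          _ = π d := hπ' (π d)
      exact hdD h6.symm
  · have hdef' : π' d < d := by
      have := (not_iff_not.2 (hEiff d)).1 (not_le.2 hdef)
      exact not_le.1 this
    rcases lt_trichotomy (π d) (π' d) with h3 | h3 | h3
    · exact aux π π' hπ hπ' ha hEiff hmax hdef hdef' h3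
    · exact hdD h3
    · exact aux π' π hπ' hπ ha' (fun i => (hEiff i).symm)
        (fun x hx => (hmax x hx).symm) hdef' hdef h3

/-- number of ballot subsets of `Fin n` of cardinality `k` -/
def cnt (n k : ℕ) : ℕ :=
  ((univ : Finset (Finset (Fin n))).filter (fun B => Ballot B ∧ B.card = k)).card

lemma cnt_eq_zero {n k : ℕ} (h : 2 * k < n) : cnt n k = 0 := by
  unfold cnt
  rw [Finset.card_eq_zero, Finset.filter_eq_empty_iff]
  rintro B - ⟨hb, hc⟩
  have := ballot_card hb
  omega

lemma pcnt_map {n : ℕ} (B : Finset (Fin n)) (m : ℕ) :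
    pcnt (B.map Fin.castSuccEmb) m = pcnt B m := by
  unfold pcnt
  rw [Finset.filter_map, Finset.card_map]
  rfl

lemma pcnt_insert_last {n : ℕ} (B : Finset (Fin n)) {m : ℕ} (hm : m ≤ n) :
    pcnt (insert (Fin.last n) (B.map Fin.castSuccEmb)) m = pcnt B m := by
  unfold pcnt
  rw [Finset.filter_insert, if_neg (by simp [Fin.last]; omega)]
  rw [Finset.filter_map, Finset.card_map]
  rfl

lemma last_not_mem_map {n : ℕ} (B : Finset (Fin n)) :
    Fin.last n ∉ B.map Fin.castSuccEmb := by
  simp only [Finset.mem_map, Fin.castSuccEmb]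
  rintro ⟨i, -, hi⟩
  have : (i : ℕ) = n := congrArg Fin.val hi
  omega

lemma pcnt_map_top {n : ℕ} (B : Finset (Fin n)) :
    pcnt (B.map Fin.castSuccEmb) (n + 1) = B.card := by
  unfold pcnt
  rw [Finset.filter_true_of_mem (fun i _ => i.isLt), Finset.card_map]

lemma ballot_map_iff {n : ℕ} (B : Finset (Fin n)) :
    Ballot (B.map Fin.castSuccEmb) ↔ Ballot B ∧ n + 1 ≤ 2 * B.card := by
  constructor
  · intro h
    refine ⟨fun m hm => ?_, ?_⟩
    · have := h m (by omega); rwa [pcnt_map] at this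
    · have := h (n+1) le_rfl; rwa [pcnt_map_top] at this
  · rintro ⟨h1, h2⟩ m hm
    rcases Nat.lt_or_ge m (n+1) with h | h
    · rw [pcnt_map]; exact h1 m (by omega)
    · have : m = n + 1 := by omega
      subst this; rwa [pcnt_map_top]

lemma ballot_insert_iff {n : ℕ} (B : Finset (Fin n)) :
    Ballot (insert (Fin.last n) (B.map Fin.castSuccEmb)) ↔ Ballot B := by
  constructor
  · intro h m hm
    have := h m (by omega)
    rwa [pcnt_insert_last B hm] at this
  · intro h m hm
    rcases Nat.lt_or_ge m (n+1) with hlt | hge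
    · rcases Nat.lt_or_ge m n with h2 | h2
      · rw [pcnt_insert_last B (by omega)]; exact h m (by omega)
      · have : m = n := by omega
        subst this
        rw [pcnt_insert_last B le_rfl]; exact h m le_rfl
    · have hm1 : m = n + 1 := by omega
      subst hm1
      have hcard : pcnt (insert (Fin.last n) (B.map Fin.castSuccEmb)) (n+1)
          = B.card + 1 := by
        unfold pcnt
        rw [Finset.filter_true_of_mem (fun i _ => i.isLt),
          Finset.card_insert_of_notMem (last_not_mem_map B), Finset.card_map]
      rw [hcard]
      have := ballot_card h
      omega

lemma cnt_succ {n k : ℕ} (hk : 1 ≤ k) (h : n + 1 ≤ 2 * k) :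
    cnt (n+1) k = cnt n (k-1) + cnt n k := by
  classical
  unfold cnt
  rw [← Finset.card_filter_add_card_filter_not
    (fun B => Fin.last n ∈ B) (s := (univ : Finset (Finset (Fin (n+1)))).filter
      (fun B => Ballot B ∧ B.card = k))]
  congr 1
  · -- sets containing last  ↔  ballot sets of card k-1
    rw [Finset.filter_filter]
    symm
    apply Finset.card_bij' (fun (B : Finset (Fin n)) _ => insert (Fin.last n) (B.map Fin.castSuccEmb))
      (fun (C : Finset (Fin (n+1))) _ => (univ : Finset (Fin n)).filter (fun i => i.castSucc ∈ C))
    · rintro B hB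
      simp only [Finset.mem_filter, Finset.mem_univ, true_and] at hB ⊢
      obtain ⟨hb, hc⟩ := hB
      refine ⟨⟨(ballot_insert_iff B).2 hb, ?_⟩, Finset.mem_insert_self _ _⟩
      rw [Finset.card_insert_of_notMem (last_not_mem_map B), Finset.card_map, hc]
      omega
    · rintro C hC
      simp only [Finset.mem_filter, Finset.mem_univ, true_and] at hC ⊢
      obtain ⟨⟨hb, hc⟩, hlast⟩ := hC
      have hCeq : insert (Fin.last n) (((univ : Finset (Fin n)).filter
          (fun i => i.castSucc ∈ C)).map Fin.castSuccEmb) = C := by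
        ext j
        simp only [Finset.mem_insert, Finset.mem_map, Finset.mem_filter, Finset.mem_univ,
          true_and, Fin.castSuccEmb]
        rcases Fin.eq_castSucc_or_eq_last j with ⟨i, rfl⟩ | rfl
        · constructor
          · rintro (h | ⟨i', hi', he⟩)
            · exact absurd (congrArg Fin.val h) (by simp [Fin.last]; omega)
            · rw [← he]; exact hi'
          · intro h; exact Or.inr ⟨i, h, rfl⟩
        · simp [hlast]
      constructor
      · rw [← ballot_insert_iff, hCeq]; exact hb
      · have h2 : C.card = (((univ : Finset (Fin n)).filter (fun i => i.castSucc ∈ C)).map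
            Fin.castSuccEmb).card + 1 := by
          conv_lhs => rw [← hCeq]
          rw [Finset.card_insert_of_notMem (last_not_mem_map _)]
        rw [Finset.card_map] at h2
        omega
    · rintro B hB
      ext i
      simp only [Finset.mem_filter, Finset.mem_univ, true_and, Finset.mem_insert,
        Finset.mem_map, Fin.castSuccEmb]
      constructor
      · rintro (h | ⟨i', hi', he⟩)
        · exact absurd (congrArg Fin.val h) (by simp [Fin.last]; omega)
        · have : i' = i := Fin.ext (by simpa using congrArg Fin.val he)
          rwa [← this]
      · intro h; exact Or.inr ⟨i, h, rfl⟩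
    · rintro C hC
      simp only [Finset.mem_filter, Finset.mem_univ, true_and] at hC
      obtain ⟨-, hlast⟩ := hC
      ext j
      simp only [Finset.mem_insert, Finset.mem_map, Finset.mem_filter, Finset.mem_univ,
        true_and, Fin.castSuccEmb]
      rcases Fin.eq_castSucc_or_eq_last j with ⟨i, rfl⟩ | rfl
      · constructor
        · rintro (h | ⟨i', hi', he⟩)
          · exact absurd (congrArg Fin.val h) (by simp [Fin.last]; omega)
          · have : i' = i := Fin.ext (by simpa using congrArg Fin.val he)
            rwa [← this]
        · intro h; exact Or.inr ⟨i, h, rfl⟩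
      · simp [hlast]
  · -- sets not containing last ↔ ballot sets of card k
    rw [Finset.filter_filter]
    symm
    apply Finset.card_bij' (fun (B : Finset (Fin n)) _ => B.map Fin.castSuccEmb)
      (fun (C : Finset (Fin (n+1))) _ => (univ : Finset (Fin n)).filter (fun i => i.castSucc ∈ C))
    · rintro B hB
      simp only [Finset.mem_filter, Finset.mem_univ, true_and] at hB ⊢
      obtain ⟨hb, hc⟩ := hB
      exact ⟨⟨(ballot_map_iff B).2 ⟨hb, by omega⟩, by rw [Finset.card_map]; exact hc⟩,
        last_not_mem_map B⟩
    · rintro C hC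
      simp only [Finset.mem_filter, Finset.mem_univ, true_and] at hC ⊢
      obtain ⟨⟨hb, hc⟩, hlast⟩ := hC
      have hCeq : (((univ : Finset (Fin n)).filter
          (fun i => i.castSucc ∈ C)).map Fin.castSuccEmb) = C := by
        ext j
        simp only [Finset.mem_map, Finset.mem_filter, Finset.mem_univ, true_and, Fin.castSuccEmb]
        rcases Fin.eq_castSucc_or_eq_last j with ⟨i, rfl⟩ | rfl
        · constructor
          · rintro ⟨i', hi', he⟩
            have : i' = i := Fin.ext (by simpa using congrArg Fin.val he)
            rwa [← this]
          · intro h; exact ⟨i, h, rfl⟩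
        · constructor
          · rintro ⟨i', hi', he⟩
            exact absurd (congrArg Fin.val he) (by simp [Fin.last]; omega)
          · intro h; exact absurd h hlast
      constructor
      · have := (ballot_map_iff ((univ : Finset (Fin n)).filter (fun i => i.castSucc ∈ C))).1
          (by rw [hCeq]; exact hb)
        exact this.1
      · have : (((univ : Finset (Fin n)).filter (fun i => i.castSucc ∈ C)).map
            Fin.castSuccEmb).card = C.card := by rw [hCeq]
        rw [Finset.card_map] at this
        omega
    · rintro B hB
      ext i
      simp only [Finset.mem_filter, Finset.mem_univ, true_and, Finset.mem_map, Fin.castSuccEmb]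
      constructor
      · rintro ⟨i', hi', he⟩
        have : i' = i := Fin.ext (by simpa using congrArg Fin.val he)
        rwa [← this]
      · intro h; exact ⟨i, h, rfl⟩
    · rintro C hC
      simp only [Finset.mem_filter, Finset.mem_univ, true_and] at hC
      obtain ⟨-, hlast⟩ := hC
      ext j
      simp only [Finset.mem_map, Finset.mem_filter, Finset.mem_univ, true_and, Fin.castSuccEmb]
      rcases Fin.eq_castSucc_or_eq_last j with ⟨i, rfl⟩ | rfl
      · constructor
        · rintro ⟨i', hi', he⟩
          have : i' = i := Fin.ext (by simpa using congrArg Fin.val he)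
          rwa [← this]
        · intro h; exact ⟨i, h, rfl⟩
      · constructor
        · rintro ⟨i', hi', he⟩
          exact absurd (congrArg Fin.val he) (by simp [Fin.last]; omega)
        · intro h; exact absurd h hlast

lemma cnt_zero_zero : cnt 0 0 = 1 := by decide

lemma cnt_zero_succ (k : ℕ) : cnt 0 (k+1) = 0 := by
  unfold cnt
  rw [Finset.card_eq_zero, Finset.filter_eq_empty_iff]
  rintro B - ⟨-, hc⟩
  have := Finset.card_le_univ B
  simp only [Finset.card_univ, Fintype.card_fin] at this
  omega

lemma cnt_add_choose : ∀ n k : ℕ, n ≤ 2 * k → cnt n k + Nat.choose n (k+1) = Nat.choose n k := by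
  intro n
  induction n with
  | zero =>
    intro k _
    cases k with
    | zero => simp [cnt_zero_zero]
    | succ k => simp [cnt_zero_succ, Nat.choose_eq_zero_of_lt]
  | succ n ih =>
    intro k hk
    obtain ⟨k', rfl⟩ : ∃ k', k = k' + 1 := ⟨k - 1, by omega⟩
    rw [cnt_succ (by omega) (by omega)]
    simp only [Nat.add_sub_cancel]
    rw [Nat.choose_succ_succ n (k'+1), Nat.choose_succ_succ n k']
    rcases Nat.lt_or_ge n (2 * k' + 1) with hcase | hcase
    · -- n ≤ 2k' : both IH apply
      have ih1 := ih k' (by omega)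
      have ih2 := ih (k'+1) (by omega)
      simp only [Nat.succ_eq_add_one] at *
      omega
    · -- n = 2k'+1
      have hn : n = 2 * k' + 1 := by omega
      have ih2 := ih (k'+1) (by omega)
      have hz : cnt n k' = 0 := cnt_eq_zero (by omega)
      have hsymm : Nat.choose n (k'+1) = Nat.choose n k' := by
        have h1 : n - k' = k' + 1 := by omega
        rw [← h1]
        exact Nat.choose_symm (by omega)
      simp only [Nat.succ_eq_add_one] at *
      omega

lemma icc_insert (j n : ℕ) (h : j ≤ n) :
    Finset.Icc j n = insert j (Finset.Icc (j+1) n) := by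
  ext x
  simp only [Finset.mem_Icc, Finset.mem_insert]
  omega

lemma sum_cnt_eq : ∀ d n j : ℕ, n = j + d → n ≤ 2 * j →
    (∑ k ∈ Finset.Icc j n, cnt n k) = Nat.choose n j := by
  intro d
  induction d with
  | zero =>
    intro n j hnj _
    have hnj' : j = n := by omega
    subst hnj'
    simp only [Finset.Icc_self, Finset.sum_singleton]
    have h1 := cnt_add_choose j j (by omega)
    rw [Nat.choose_succ_self] at h1
    rw [Nat.choose_self]
    rw [Nat.choose_self] at h1
    omega
  | succ d ihd =>
    intro n j hnj hj
    rw [icc_insert j n (by omega), Finset.sum_insert (by simp)]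
    rw [ihd n (j+1) (by omega) (by omega)]
    exact cnt_add_choose n j hj

lemma ballot_count (n : ℕ) :
    ((univ : Finset (Finset (Fin n))).filter (fun B => Ballot B)).card
      = Nat.choose n (n / 2) := by
  classical
  rw [Finset.card_eq_sum_card_fiberwise
    (f := fun B : Finset (Fin n) => B.card) (t := Finset.range (n+1))
    (fun B _ => by
      simp only [Finset.mem_coe, Finset.mem_range]
      have := Finset.card_le_univ B
      simp only [Finset.card_univ, Fintype.card_fin] at this
      omega)]
  have hsub : Finset.Icc (n - n/2) n ⊆ Finset.range (n+1) := by
    intro x hx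
    simp only [Finset.mem_Icc] at hx
    exact Finset.mem_range.2 (by omega)
  rw [← Finset.sum_subset hsub]
  · have : ∀ k ∈ Finset.Icc (n - n/2) n,
        ((univ.filter (fun B : Finset (Fin n) => Ballot B)).filter
          (fun B => B.card = k)).card = cnt n k := by
      intro k _
      unfold cnt
      rw [Finset.filter_filter]
    rw [Finset.sum_congr rfl this]
    rw [sum_cnt_eq (n - (n - n/2)) n (n - n/2) (by omega) (by omega)]
    rw [Nat.choose_symm (by omega)]
  · intro x hx hnx
    simp only [Finset.mem_range] at hx
    simp only [Finset.mem_Icc] at hnx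
    have hlt : 2 * x < n := by omega
    have : ((univ.filter (fun B : Finset (Fin n) => Ballot B)).filter
        (fun B => B.card = x)).card = cnt n x := by
      unfold cnt; rw [Finset.filter_filter]
    rw [this]
    exact cnt_eq_zero hlt

namespace Build

/-- level function of a subset: #B∩[0,m) − #Bᶜ∩[0,m), as an integer `2*pcnt − m`. -/
def lvl {n : ℕ} (B : Finset (Fin n)) (m : ℕ) : ℤ := 2 * (pcnt B m : ℤ) - m

lemma pcnt_zero {n : ℕ} (B : Finset (Fin n)) : pcnt B 0 = 0 := by
  unfold pcnt
  rw [Finset.card_eq_zero, Finset.filter_eq_empty_iff]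
  intro i _
  omega

lemma lvl_zero {n : ℕ} (B : Finset (Fin n)) : lvl B 0 = 0 := by
  simp [lvl, pcnt_zero]

lemma pcnt_succ_of_mem {n : ℕ} {B : Finset (Fin n)} {m : ℕ} (hm : m < n)
    (h : (⟨m, hm⟩ : Fin n) ∈ B) : pcnt B (m+1) = pcnt B m + 1 := by
  unfold pcnt
  have : B.filter (fun i : Fin n => (i : ℕ) < m + 1)
      = insert (⟨m, hm⟩ : Fin n) (B.filter (fun i : Fin n => (i : ℕ) < m)) := by
    ext i
    simp only [Finset.mem_filter, Finset.mem_insert]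
    constructor
    · rintro ⟨hiB, hilt⟩
      rcases Nat.lt_or_ge (i : ℕ) m with h2 | h2
      · exact Or.inr ⟨hiB, h2⟩
      · exact Or.inl (Fin.ext (by simp only [Fin.val_mk]; omega))
    · rintro (rfl | ⟨hiB, hilt⟩)
      · exact ⟨h, by simp only [Fin.val_mk]; omega⟩
      · exact ⟨hiB, by omega⟩
  rw [this, Finset.card_insert_of_notMem (by simp)]

lemma pcnt_succ_of_not_mem {n : ℕ} {B : Finset (Fin n)} {m : ℕ} (hm : m < n)
    (h : (⟨m, hm⟩ : Fin n) ∉ B) : pcnt B (m+1) = pcnt B m := by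
  unfold pcnt
  congr 1
  ext i
  simp only [Finset.mem_filter]
  constructor
  · rintro ⟨hiB, hilt⟩
    refine ⟨hiB, ?_⟩
    rcases Nat.lt_or_ge (i : ℕ) m with h2 | h2
    · exact h2
    · exact absurd hiB (by have : i = ⟨m, hm⟩ := Fin.ext (by simp only [Fin.val_mk]; omega); rw [this]; exact h)
  · rintro ⟨hiB, hilt⟩
    exact ⟨hiB, by omega⟩

lemma lvl_succ_of_mem {n : ℕ} {B : Finset (Fin n)} {m : ℕ} (hm : m < n)
    (h : (⟨m, hm⟩ : Fin n) ∈ B) : lvl B (m+1) = lvl B m + 1 := by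
  unfold lvl
  rw [pcnt_succ_of_mem hm h]
  push_cast
  ring

lemma lvl_succ_of_not_mem {n : ℕ} {B : Finset (Fin n)} {m : ℕ} (hm : m < n)
    (h : (⟨m, hm⟩ : Fin n) ∉ B) : lvl B (m+1) = lvl B m - 1 := by
  unfold lvl
  rw [pcnt_succ_of_not_mem hm h]
  push_cast
  ring

lemma lvl_succ_le {n : ℕ} {B : Finset (Fin n)} {m : ℕ} (hm : m < n) :
    lvl B (m+1) ≤ lvl B m + 1 ∧ lvl B m - 1 ≤ lvl B (m+1) := by
  by_cases h : (⟨m, hm⟩ : Fin n) ∈ B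
  · rw [lvl_succ_of_mem hm h]; omega
  · rw [lvl_succ_of_not_mem hm h]; omega

lemma mem_of_lvl_succ {n : ℕ} {B : Finset (Fin n)} {m : ℕ} (hm : m < n)
    (h : lvl B (m+1) = lvl B m + 1) : (⟨m, hm⟩ : Fin n) ∈ B := by
  by_contra hc
  rw [lvl_succ_of_not_mem hm hc] at h
  omega

lemma lvl_nonneg {n : ℕ} {B : Finset (Fin n)} (hB : Ballot B) {m : ℕ} (hm : m ≤ n) :
    0 ≤ lvl B m := by
  have := hB m hm
  unfold lvl
  omega

lemma lvl_univ {n : ℕ} (B : Finset (Fin n)) : lvl B n = 2 * (B.card : ℤ) - n := by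
  unfold lvl
  rw [pcnt_univ_eq]

/-- is `e` an opener (its arc closes later, i.e. the level returns to `lvl e`)? -/
def Op {n : ℕ} (B : Finset (Fin n)) (e : Fin n) : Prop :=
  ∃ m, m ≤ n ∧ (e : ℕ) < m ∧ lvl B m ≤ lvl B (e : ℕ)

instance {n : ℕ} (B : Finset (Fin n)) : DecidablePred (Op B) := fun e => by
  unfold Op; infer_instance

/-- openers -/
def opS {n : ℕ} (B : Finset (Fin n)) : Finset (Fin n) := B.filter (Op B)

/-- fixed points -/
def fxS {n : ℕ} (B : Finset (Fin n)) : Finset (Fin n) := B.filter (fun e => ¬ Op B e)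

lemma fx_lvl_lt {n : ℕ} {B : Finset (Fin n)} {e : Fin n} (he : e ∈ fxS B)
    {m : ℕ} (hem : (e : ℕ) < m) (hm : m ≤ n) : lvl B (e : ℕ) < lvl B m := by
  rw [fxS, Finset.mem_filter] at he
  have := he.2
  simp only [Op] at this
  push_neg at this
  exact this m hm hem

lemma opS_union_fxS {n : ℕ} (B : Finset (Fin n)) : opS B ∪ fxS B = B :=
  Finset.filter_union_filter_not_eq _ B

lemma opS_disj_fxS {n : ℕ} (B : Finset (Fin n)) : Disjoint (opS B) (fxS B) :=
  Finset.disjoint_filter_filter_not B B _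

lemma card_split {n : ℕ} (B : Finset (Fin n)) (P : Fin n → Prop) [DecidablePred P] :
    (B.filter P).card = ((opS B).filter P).card + ((fxS B).filter P).card := by
  conv_lhs => rw [← opS_union_fxS B]
  rw [Finset.filter_union, Finset.card_union_of_disjoint
    (Finset.disjoint_filter_filter (opS_disj_fxS B))]

end Build

namespace Build

variable {n : ℕ} {B : Finset (Fin n)}

lemma fx_prefix_card (hB : Ballot B) {m : ℕ} (hm : m ≤ n) :
    (((fxS B).filter (fun i : Fin n => (i : ℕ) < m)).card : ℤ) ≤ lvl B m := by
  have hinj : ((fxS B).filter (fun i : Fin n => (i : ℕ) < m)).card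
      ≤ (Finset.Ico (0 : ℤ) (lvl B m)).card := by
    apply Finset.card_le_card_of_injOn (fun e : Fin n => lvl B (e : ℕ))
    · intro e he
      simp only [Finset.mem_coe, Finset.mem_filter] at he
      rw [Finset.mem_coe, Finset.mem_Ico]
      exact ⟨lvl_nonneg hB (by omega), fx_lvl_lt he.1 he.2 hm⟩
    · intro x hx y hy hxy
      simp only [Finset.coe_filter, Set.mem_setOf_eq] at hx hy
      replace hxy : lvl B (x : ℕ) = lvl B (y : ℕ) := hxy
      by_contra hne
      rcases lt_trichotomy x y with hc | hc | hc
      · have := fx_lvl_lt hx.1 (show (x:ℕ) < (y:ℕ) from hc) (by omega)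
        omega
      · exact hne hc
      · have := fx_lvl_lt hy.1 (show (y:ℕ) < (x:ℕ) from hc) (by omega)
        omega
  rw [Int.card_Ico] at hinj
  have h0 := lvl_nonneg hB hm
  omega

lemma fx_suffix_card (hB : Ballot B) {f : Fin n} (hf : f ∈ fxS B) :
    (((fxS B).filter (fun i : Fin n => (f : ℕ) < (i : ℕ))).card : ℤ)
      ≤ lvl B n - lvl B (f : ℕ) - 1 := by
  have hinj : ((fxS B).filter (fun i : Fin n => (f : ℕ) < (i : ℕ))).card
      ≤ (Finset.Ico (lvl B (f : ℕ) + 1) (lvl B n)).card := by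
    apply Finset.card_le_card_of_injOn (fun e : Fin n => lvl B (e : ℕ))
    · intro e he
      simp only [Finset.mem_coe, Finset.mem_filter] at he
      rw [Finset.mem_coe, Finset.mem_Ico]
      constructor
      · have := fx_lvl_lt hf he.2 (le_of_lt e.isLt)
        dsimp only; omega
      · exact fx_lvl_lt he.1 e.isLt le_rfl
    · intro x hx y hy hxy
      simp only [Finset.coe_filter, Set.mem_setOf_eq] at hx hy
      replace hxy : lvl B (x : ℕ) = lvl B (y : ℕ) := hxy
      by_contra hne
      rcases lt_trichotomy x y with hc | hc | hc
      · have := fx_lvl_lt hx.1 (show (x:ℕ) < (y:ℕ) from hc) (by omega)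
        omega
      · exact hne hc
      · have := fx_lvl_lt hy.1 (show (y:ℕ) < (x:ℕ) from hc) (by omega)
        omega
  rw [Int.card_Ico] at hinj
  have h0 := fx_lvl_lt hf f.isLt le_rfl
  omega

/-- prefix dominance : below any threshold there are at least as many openers
as closers -/
lemma op_prefix_ge (hB : Ballot B) {m : ℕ} (hm : m ≤ n) :
    pcnt Bᶜ m ≤ ((opS B).filter (fun i : Fin n => (i : ℕ) < m)).card := by
  have h1 := card_split B (fun i : Fin n => (i : ℕ) < m)
  have h2 := pcnt_add_compl B hm
  have h3 := fx_prefix_card hB hm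
  have h4 : lvl B m = 2 * (pcnt B m : ℤ) - m := rfl
  unfold pcnt at *
  omega

/-- the number of fixed points equals the final level -/
lemma fx_card (hB : Ballot B) : ((fxS B).card : ℤ) = lvl B n := by
  have hle : ((fxS B).card : ℤ) ≤ lvl B n := by
    have := fx_prefix_card hB (le_refl n)
    rwa [Finset.filter_true_of_mem (fun i _ => i.isLt)] at this
  have hge : (Finset.Ico (0 : ℤ) (lvl B n)).card ≤ (fxS B).card := by
    apply Finset.card_le_card_of_surjOn (fun e : Fin n => lvl B (e : ℕ))
    intro ℓ hℓ
    simp only [Finset.coe_Ico, Set.mem_Ico] at hℓ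
    have hn0 : 0 < n := by
      rcases Nat.eq_zero_or_pos n with h | h
      · exfalso
        subst h
        have : lvl B 0 = 0 := lvl_zero B
        omega
      · exact h
    set T := (Finset.range n).filter (fun m => lvl B m ≤ ℓ) with hT
    have hTne : T.Nonempty := ⟨0, by
      simp only [hT, Finset.mem_filter, Finset.mem_range]
      exact ⟨hn0, by rw [lvl_zero]; exact hℓ.1⟩⟩
    set ms := T.max' hTne with hms
    have hmsT : ms ∈ T := T.max'_mem hTne
    have hmsn : ms < n := by
      have := hmsT
      simp only [hT, Finset.mem_filter, Finset.mem_range] at this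
      exact this.1
    have hmsl : lvl B ms ≤ ℓ := by
      have := hmsT
      simp only [hT, Finset.mem_filter, Finset.mem_range] at this
      exact this.2
    have claim1 : ∀ m, ms < m → m ≤ n → ℓ < lvl B m := by
      intro m hm1 hm2
      rcases Nat.lt_or_ge m n with hc | hc
      · by_contra hcon
        push_neg at hcon
        have : m ∈ T := by
          simp only [hT, Finset.mem_filter, Finset.mem_range]
          exact ⟨hc, hcon⟩
        exact absurd (T.le_max' m this) (by omega)
      · have : m = n := by omega
        rw [this]; exact hℓ.2
    have hstep := lvl_succ_le (B := B) hmsn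
    have h2 : ℓ < lvl B (ms+1) := claim1 (ms+1) (Nat.lt_succ_self ms) (by omega)
    have heq1 : lvl B (ms+1) = lvl B ms + 1 := by omega
    have heq2 : lvl B ms = ℓ := by omega
    have heB : (⟨ms, hmsn⟩ : Fin n) ∈ B := mem_of_lvl_succ hmsn heq1
    have heFx : (⟨ms, hmsn⟩ : Fin n) ∈ fxS B := by
      simp only [fxS, Finset.mem_filter]
      refine ⟨heB, ?_⟩
      rintro ⟨m, hmn, hlt, hle⟩
      simp only [Fin.val_mk] at hlt hle
      rw [heq2] at hle
      exact absurd (claim1 m hlt hmn) (not_lt.2 hle)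
    exact ⟨⟨ms, hmsn⟩, by simpa using heFx, by simp [heq2]⟩
  rw [Int.card_Ico] at hge
  have h0 : 0 ≤ lvl B n := lvl_nonneg hB le_rfl
  omega

end Build

namespace Build

variable {n : ℕ}

lemma flt (X : Finset (Fin n)) (y : Fin n) :
    X.filter (fun x => x < y) = X.filter (fun x : Fin n => (x : ℕ) < (y : ℕ)) := by
  apply Finset.filter_congr
  intro x _
  exact Fin.lt_def

lemma filter_lt_succ (X : Finset (Fin n)) (y : Fin n) (hy : y ∉ X) :
    X.filter (fun x : Fin n => (x : ℕ) < (y : ℕ) + 1)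
      = X.filter (fun x : Fin n => (x : ℕ) < (y : ℕ)) := by
  apply Finset.filter_congr
  intro x hx
  constructor
  · intro h
    rcases Nat.lt_or_ge (x : ℕ) (y : ℕ) with h2 | h2
    · exact h2
    · exfalso
      have : x = y := Fin.ext (by omega)
      rw [this] at hx
      exact hy hx
  · intro h; omega

lemma split_at_mem {X : Finset (Fin n)} {f : Fin n} (hf : f ∈ X) :
    (X.filter (fun x : Fin n => (x : ℕ) < (f : ℕ))).card
      + (X.filter (fun x : Fin n => (f : ℕ) < (x : ℕ))).card + 1 = X.card := by
  have h1 := Finset.card_filter_add_card_filter_not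
    (s := X) (fun x : Fin n => (x : ℕ) < (f : ℕ))
  have h2 : X.filter (fun x : Fin n => ¬ (x : ℕ) < (f : ℕ))
      = insert f (X.filter (fun x : Fin n => (f : ℕ) < (x : ℕ))) := by
    ext x
    simp only [Finset.mem_filter, Finset.mem_insert, not_lt]
    constructor
    · rintro ⟨hxX, hge⟩
      rcases Nat.lt_or_ge (f : ℕ) (x : ℕ) with h3 | h3
      · exact Or.inr ⟨hxX, h3⟩
      · exact Or.inl (Fin.ext (by omega))
    · rintro (rfl | ⟨hxX, hgt⟩)
      · exact ⟨hf, le_rfl⟩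
      · exact ⟨hxX, by omega⟩
  rw [h2, Finset.card_insert_of_notMem (by simp)] at h1
  omega

lemma split_at_not_mem {X : Finset (Fin n)} {f : Fin n} (hf : f ∉ X) :
    (X.filter (fun x : Fin n => (x : ℕ) < (f : ℕ))).card
      + (X.filter (fun x : Fin n => (f : ℕ) < (x : ℕ))).card = X.card := by
  have h1 := Finset.card_filter_add_card_filter_not
    (s := X) (fun x : Fin n => (x : ℕ) < (f : ℕ))
  have h2 : X.filter (fun x : Fin n => ¬ (x : ℕ) < (f : ℕ))
      = X.filter (fun x : Fin n => (f : ℕ) < (x : ℕ)) := by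
    apply Finset.filter_congr
    intro x hx
    simp only [not_lt]
    constructor
    · intro h
      rcases Nat.lt_or_ge (f : ℕ) (x : ℕ) with h3 | h3
      · exact h3
      · exfalso; exact hf (by rwa [show f = x from Fin.ext (by omega)])
    · intro h; omega
  rw [h2] at h1
  omega

variable {B : Finset (Fin n)}

lemma opS_subset : opS B ⊆ B := Finset.filter_subset _ _

lemma fxS_subset : fxS B ⊆ B := Finset.filter_subset _ _

lemma op_card (hB : Ballot B) : (opS B).card = Bᶜ.card := by
  have hsplit : (opS B).card + (fxS B).card = B.card := by
    rw [← Finset.card_union_of_disjoint (opS_disj_fxS B), opS_union_fxS]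
  have hfx := fx_card hB
  rw [lvl_univ] at hfx
  have hcompl : Bᶜ.card = n - B.card := by
    rw [Finset.card_compl, Fintype.card_fin]
  have hcard : B.card ≤ n := by
    have := Finset.card_le_univ B
    simpa using this
  have hb := ballot_card hB
  omega

lemma op_at_fix (hB : Ballot B) {f : Fin n} (hf : f ∈ fxS B) :
    ((opS B).filter (fun x : Fin n => (x : ℕ) < (f : ℕ))).card = pcnt Bᶜ (f : ℕ) := by
  have hfB : f ∈ B := fxS_subset hf
  have hfop : f ∉ opS B := fun h => (Finset.disjoint_left.1 (opS_disj_fxS B)) h hf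
  have hfc : f ∉ Bᶜ := by simp [hfB]
  have a1 := card_split B (fun x : Fin n => (x : ℕ) < (f : ℕ))
  have a2 := card_split B (fun x : Fin n => (f : ℕ) < (x : ℕ))
  have a3 := fx_suffix_card hB hf
  have a4 := split_at_mem hfB
  have a5 := pcnt_add_compl B (le_of_lt f.isLt)
  have a5' := pcnt_add_compl B (le_refl n)
  have a6 := split_at_not_mem hfc
  have a7 := split_at_not_mem hfop
  have a8 := op_prefix_ge hB (le_of_lt f.isLt)
  have a13 := op_card hB
  have a9 : lvl B (f : ℕ) = 2 * (pcnt B (f : ℕ) : ℤ) - (f : ℕ) := rfl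
  have a10 : lvl B n = 2 * ((B.card) : ℤ) - n := lvl_univ B
  have a11 : pcnt B n = B.card := pcnt_univ_eq B
  have a12 : pcnt Bᶜ n = Bᶜ.card := pcnt_univ_eq Bᶜ
  unfold pcnt at *
  omega

section Rank

lemma rank_lt_of_mem {X : Finset (Fin n)} {x : Fin n} (hx : x ∈ X) :
    (X.filter (fun z => z < x)).card < X.card := by
  apply Finset.card_lt_card
  rw [Finset.ssubset_iff_of_subset (Finset.filter_subset _ _)]
  exact ⟨x, hx, by simp⟩

lemma rank_emb (X : Finset (Fin n)) {q : ℕ} (hX : X.card = q) (j : Fin q) :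
    (X.filter (fun i => i < X.orderEmbOfFin hX j)).card = (j : ℕ) := by
  have himg : X.filter (fun i => i < X.orderEmbOfFin hX j)
      = (univ.filter (fun i : Fin q => i < j)).image (X.orderEmbOfFin hX) := by
    ext x
    simp only [Finset.mem_filter, Finset.mem_image, Finset.mem_univ, true_and]
    constructor
    · rintro ⟨hxX, hxlt⟩
      have hr : x ∈ Set.range (X.orderEmbOfFin hX) := by
        rw [Finset.range_orderEmbOfFin]; exact hxX
      obtain ⟨i, rfl⟩ := hr
      exact ⟨i, (OrderEmbedding.lt_iff_lt _).1 hxlt, rfl⟩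
    · rintro ⟨i, hij, rfl⟩
      exact ⟨Finset.orderEmbOfFin_mem X hX i, (OrderEmbedding.lt_iff_lt _).2 hij⟩
  rw [himg, Finset.card_image_of_injective _ (X.orderEmbOfFin hX).injective]
  have hconv : (univ.filter (fun i : Fin q => i < j))
      = univ.filter (fun i : Fin q => (i : ℕ) < (j : ℕ)) := flt _ _
  rw [hconv, card_filter_val_lt (le_of_lt j.isLt)]

lemma emb_rank {X : Finset (Fin n)} {q : ℕ} (hX : X.card = q) {x : Fin n} (hx : x ∈ X) :
    X.orderEmbOfFin hX ⟨(X.filter (fun z => z < x)).card, hX ▸ rank_lt_of_mem hx⟩ = x := by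
  have hr : x ∈ Set.range (X.orderEmbOfFin hX) := by
    rw [Finset.range_orderEmbOfFin]; exact hx
  obtain ⟨i, rfl⟩ := hr
  congr 1
  exact Fin.ext (by simp [rank_emb X hX i])

lemma emb_lt_iff {X : Finset (Fin n)} {q : ℕ} (hX : X.card = q) (j : Fin q) (y : Fin n) :
    X.orderEmbOfFin hX j < y ↔ (j : ℕ) < (X.filter (fun z => z < y)).card := by
  constructor
  · intro h
    have hsub : (univ.filter (fun i : Fin q => i ≤ j)).image (X.orderEmbOfFin hX)
        ⊆ X.filter (fun z => z < y) := by
      intro x hx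
      simp only [Finset.mem_image, Finset.mem_filter, Finset.mem_univ, true_and] at hx ⊢
      obtain ⟨i, hij, rfl⟩ := hx
      refine ⟨Finset.orderEmbOfFin_mem X hX i, lt_of_le_of_lt ?_ h⟩
      exact (OrderEmbedding.le_iff_le _).2 hij
    have hcard := Finset.card_le_card hsub
    rw [Finset.card_image_of_injective _ (X.orderEmbOfFin hX).injective] at hcard
    have : (univ.filter (fun i : Fin q => i ≤ j)).card = (j : ℕ) + 1 := by
      have : (univ.filter (fun i : Fin q => i ≤ j))
          = univ.filter (fun i : Fin q => (i : ℕ) < (j : ℕ) + 1) := by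
        apply Finset.filter_congr
        intro x _
        rw [Fin.le_def]
        omega
      rw [this, card_filter_val_lt j.isLt]
    omega
  · intro h
    by_contra hc
    push_neg at hc
    have hsub : X.filter (fun z => z < y) ⊆
        (univ.filter (fun i : Fin q => i < j)).image (X.orderEmbOfFin hX) := by
      intro x hx
      simp only [Finset.mem_filter, Finset.mem_image, Finset.mem_univ, true_and] at hx ⊢
      obtain ⟨hxX, hxy⟩ := hx
      have hr : x ∈ Set.range (X.orderEmbOfFin hX) := by
        rw [Finset.range_orderEmbOfFin]; exact hxX
      obtain ⟨i, rfl⟩ := hr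
      exact ⟨i, (OrderEmbedding.lt_iff_lt _).1 (lt_of_lt_of_le hxy hc), rfl⟩
    have hcard := Finset.card_le_card hsub
    rw [Finset.card_image_of_injective _ (X.orderEmbOfFin hX).injective] at hcard
    have : (univ.filter (fun i : Fin q => i < j)).card = (j : ℕ) := by
      rw [flt _ _, card_filter_val_lt (le_of_lt j.isLt)]
    omega

lemma rank_mono {X : Finset (Fin n)} {x y : Fin n} (hx : x ∈ X) (hxy : x < y) :
    (X.filter (fun z => z < x)).card < (X.filter (fun z => z < y)).card := by
  apply Finset.card_lt_card
  constructor
  · intro z hz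
    simp only [Finset.mem_filter] at hz ⊢
    exact ⟨hz.1, lt_trans hz.2 hxy⟩
  · intro hsub
    have : x ∈ X.filter (fun z => z < x) := hsub (by simp [hx, hxy])
    simp at this

end Rank

end Build

namespace Build

variable {n : ℕ}

def dOf (B : Finset (Fin n)) (hq : (opS B).card = Bᶜ.card) (e : Fin n) (he : e ∈ opS B) : Fin n :=
  Bᶜ.orderEmbOfFin rfl ⟨((opS B).filter (fun z => z < e)).card, hq ▸ rank_lt_of_mem he⟩

def sOf (B : Finset (Fin n)) (hq : (opS B).card = Bᶜ.card) (d : Fin n) (hd : d ∈ Bᶜ) : Fin n :=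
  (opS B).orderEmbOfFin hq ⟨(Bᶜ.filter (fun z => z < d)).card, rank_lt_of_mem hd⟩

variable {B : Finset (Fin n)}

lemma dOf_mem (hq : (opS B).card = Bᶜ.card) {e : Fin n} (he : e ∈ opS B) :
    dOf B hq e he ∈ Bᶜ := Finset.orderEmbOfFin_mem _ rfl _

lemma sOf_mem (hq : (opS B).card = Bᶜ.card) {d : Fin n} (hd : d ∈ Bᶜ) :
    sOf B hq d hd ∈ opS B := Finset.orderEmbOfFin_mem _ hq _

lemma dOf_not_op (hq : (opS B).card = Bᶜ.card) {e : Fin n} (he : e ∈ opS B) :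
    dOf B hq e he ∉ opS B := by
  intro h
  have h1 := dOf_mem hq he
  have h2 := opS_subset h
  rw [Finset.mem_compl] at h1
  exact h1 h2

lemma sOf_not_compl (hq : (opS B).card = Bᶜ.card) {d : Fin n} (hd : d ∈ Bᶜ) :
    sOf B hq d hd ∉ Bᶜ := by
  rw [Finset.mem_compl, not_not]
  exact opS_subset (sOf_mem hq hd)

lemma sOf_dOf (hq : (opS B).card = Bᶜ.card) {e : Fin n} (he : e ∈ opS B) :
    sOf B hq (dOf B hq e he) (dOf_mem hq he) = e := by
  have h1 : (Bᶜ.filter (fun z => z < dOf B hq e he)).card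
      = ((opS B).filter (fun z => z < e)).card := rank_emb Bᶜ rfl _
  have h2 := emb_rank hq he
  unfold sOf
  convert h2 using 2
  exact Fin.ext h1

lemma dOf_sOf (hq : (opS B).card = Bᶜ.card) {d : Fin n} (hd : d ∈ Bᶜ) :
    dOf B hq (sOf B hq d hd) (sOf_mem hq hd) = d := by
  have h1 : ((opS B).filter (fun z => z < sOf B hq d hd)).card
      = (Bᶜ.filter (fun z => z < d)).card := rank_emb (opS B) hq _
  have h2 := emb_rank (rfl : Bᶜ.card = Bᶜ.card) hd
  unfold dOf
  convert h2 using 2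
  exact Fin.ext h1

lemma lt_dOf (hB : Ballot B) (hq : (opS B).card = Bᶜ.card) {e : Fin n} (he : e ∈ opS B) :
    e < dOf B hq e he := by
  have hne : dOf B hq e he ≠ e := by
    intro h
    have h1 := dOf_mem hq he
    rw [h, Finset.mem_compl] at h1
    exact h1 (opS_subset he)
  have hnlt : ¬ dOf B hq e he < e := by
    intro hlt
    have h2 := (emb_lt_iff rfl _ e).1 hlt
    simp only [Fin.val_mk] at h2
    have h3 : (Bᶜ.filter (fun z => z < e)).card
        ≤ ((opS B).filter (fun z => z < e)).card := by
      rw [flt Bᶜ e, flt (opS B) e]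
      exact op_prefix_ge hB (le_of_lt e.isLt)
    omega
  rcases lt_trichotomy e (dOf B hq e he) with h | h | h
  · exact h
  · exact absurd h.symm hne
  · exact absurd h hnlt

lemma sOf_lt (hB : Ballot B) (hq : (opS B).card = Bᶜ.card) {d : Fin n} (hd : d ∈ Bᶜ) :
    sOf B hq d hd < d := by
  apply (emb_lt_iff hq _ d).2
  simp only [Fin.val_mk]
  have hmem : (⟨(d : ℕ), d.isLt⟩ : Fin n) ∈ Bᶜ := by rw [Fin.eta]; exact hd
  have h1 := op_prefix_ge hB (m := (d : ℕ) + 1) d.isLt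
  have h2 : pcnt Bᶜ ((d : ℕ) + 1) = pcnt Bᶜ (d : ℕ) + 1 := pcnt_succ_of_mem d.isLt hmem
  have hdop : d ∉ opS B := by
    intro h
    have := opS_subset h
    rw [Finset.mem_compl] at hd
    exact hd this
  have h3 := filter_lt_succ (opS B) d hdop
  rw [flt Bᶜ d, flt (opS B) d]
  unfold pcnt at h1 h2
  rw [h3] at h1
  omega

lemma dOf_mono (hq : (opS B).card = Bᶜ.card) {e e' : Fin n}
    (he : e ∈ opS B) (he' : e' ∈ opS B) (h : e < e') :
    dOf B hq e he < dOf B hq e' he' := by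
  unfold dOf
  apply (Bᶜ.orderEmbOfFin rfl).strictMono
  rw [Fin.mk_lt_mk]
  exact rank_mono he h

lemma sOf_mono (hq : (opS B).card = Bᶜ.card) {d d' : Fin n}
    (hd : d ∈ Bᶜ) (hd' : d' ∈ Bᶜ) (h : d < d') :
    sOf B hq d hd < sOf B hq d' hd' := by
  unfold sOf
  apply ((opS B).orderEmbOfFin hq).strictMono
  rw [Fin.mk_lt_mk]
  exact rank_mono hd h

lemma dOf_lt_fix (hB : Ballot B) (hq : (opS B).card = Bᶜ.card) {e f : Fin n}
    (he : e ∈ opS B) (hf : f ∈ fxS B) (hef : e < f) :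
    dOf B hq e he < f := by
  apply (emb_lt_iff rfl _ f).2
  simp only [Fin.val_mk]
  have h1 := rank_mono he hef
  have h2 : ((opS B).filter (fun z => z < f)).card = (Bᶜ.filter (fun z => z < f)).card := by
    rw [flt (opS B) f, flt Bᶜ f]
    exact op_at_fix hB hf
  omega

/-- the constructed involution, as a function -/
def bF (B : Finset (Fin n)) (hq : (opS B).card = Bᶜ.card) : Fin n → Fin n := fun i =>
  if h : i ∈ opS B then dOf B hq i h
  else if h2 : i ∈ Bᶜ then sOf B hq i h2
  else i

lemma bF_invol (hq : (opS B).card = Bᶜ.card) : Function.Involutive (bF B hq) := by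
  intro i
  by_cases h : i ∈ opS B
  · have h1 : bF B hq i = dOf B hq i h := dif_pos h
    rw [h1]
    have h2 : bF B hq (dOf B hq i h) = sOf B hq (dOf B hq i h) (dOf_mem hq h) := by
      unfold bF
      rw [dif_neg (dOf_not_op hq h), dif_pos (dOf_mem hq h)]
    rw [h2, sOf_dOf]
  · by_cases h2 : i ∈ Bᶜ
    · have h1 : bF B hq i = sOf B hq i h2 := by
        unfold bF; rw [dif_neg h, dif_pos h2]
      rw [h1]
      have h3 : bF B hq (sOf B hq i h2) = dOf B hq (sOf B hq i h2) (sOf_mem hq h2) := by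
        unfold bF
        rw [dif_pos (sOf_mem hq h2)]
      rw [h3, dOf_sOf]
    · have h1 : bF B hq i = i := by
        unfold bF; rw [dif_neg h, dif_neg h2]
      rw [h1, h1]

/-- the constructed involution -/
def bPerm (B : Finset (Fin n)) (hq : (opS B).card = Bᶜ.card) : Equiv.Perm (Fin n) :=
  Function.Involutive.toPerm _ (bF_invol hq)

lemma bPerm_apply (hq : (opS B).card = Bᶜ.card) (i : Fin n) :
    bPerm B hq i = bF B hq i := rfl

lemma bPerm_invol (hq : (opS B).card = Bᶜ.card) : IsInvolution (bPerm B hq) := by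
  intro i
  rw [bPerm_apply, bPerm_apply]
  exact bF_invol hq i

lemma mem_B_cases {i : Fin n} (hi : i ∈ B) : i ∈ opS B ∨ i ∈ fxS B := by
  rw [← opS_union_fxS B] at hi
  exact Finset.mem_union.1 hi

lemma fx_not_op {i : Fin n} (hi : i ∈ fxS B) : i ∉ opS B :=
  fun h => (Finset.disjoint_left.1 (opS_disj_fxS B)) h hi

lemma bPerm_exSet (hB : Ballot B) (hq : (opS B).card = Bᶜ.card) :
    exSet (bPerm B hq) = B := by
  ext i
  simp only [exSet, Finset.mem_filter, Finset.mem_univ, true_and]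
  rw [bPerm_apply]
  by_cases h : i ∈ opS B
  · have h1 : bF B hq i = dOf B hq i h := dif_pos h
    rw [h1]
    simp only [le_of_lt (lt_dOf hB hq h), true_iff]
    exact opS_subset h
  · by_cases h2 : i ∈ Bᶜ
    · have h1 : bF B hq i = sOf B hq i h2 := by
        unfold bF; rw [dif_neg h, dif_pos h2]
      rw [h1]
      constructor
      · intro hle
        exact absurd hle (not_le.2 (sOf_lt hB hq h2))
      · intro hmem
        rw [Finset.mem_compl] at h2
        exact absurd hmem h2
    · have h1 : bF B hq i = i := by
        unfold bF; rw [dif_neg h, dif_neg h2]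
      rw [h1]
      simp only [le_refl, true_iff]
      rw [Finset.mem_compl, not_not] at h2
      exact h2

lemma incr_on_B (hB : Ballot B) (hq : (opS B).card = Bᶜ.card) {i j : Fin n}
    (hij : i < j) (hi : i ∈ B) (hj : j ∈ B) : bPerm B hq i < bPerm B hq j := by
  rw [bPerm_apply, bPerm_apply]
  rcases mem_B_cases hi with hio | hif
  · have h1 : bF B hq i = dOf B hq i hio := dif_pos hio
    rcases mem_B_cases hj with hjo | hjf
    · have h2 : bF B hq j = dOf B hq j hjo := dif_pos hjo
      rw [h1, h2]
      exact dOf_mono hq hio hjo hij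
    · have h2 : bF B hq j = j := by
        unfold bF
        rw [dif_neg (fx_not_op hjf), dif_neg (by simp [fxS_subset hjf])]
      rw [h1, h2]
      exact dOf_lt_fix hB hq hio hjf hij
  · have h1 : bF B hq i = i := by
      unfold bF
      rw [dif_neg (fx_not_op hif), dif_neg (by simp [fxS_subset hif])]
    rcases mem_B_cases hj with hjo | hjf
    · have h2 : bF B hq j = dOf B hq j hjo := dif_pos hjo
      rw [h1, h2]
      exact lt_trans hij (lt_dOf hB hq hjo)
    · have h2 : bF B hq j = j := by
        unfold bF
        rw [dif_neg (fx_not_op hjf), dif_neg (by simp [fxS_subset hjf])]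
      rw [h1, h2]
      exact hij

lemma incr_on_compl (hB : Ballot B) (hq : (opS B).card = Bᶜ.card) {i j : Fin n}
    (hij : i < j) (hi : i ∉ B) (hj : j ∉ B) : bPerm B hq i < bPerm B hq j := by
  rw [bPerm_apply, bPerm_apply]
  have hi' : i ∈ Bᶜ := Finset.mem_compl.2 hi
  have hj' : j ∈ Bᶜ := Finset.mem_compl.2 hj
  have hio : i ∉ opS B := fun h => hi (opS_subset h)
  have hjo : j ∉ opS B := fun h => hj (opS_subset h)
  have h1 : bF B hq i = sOf B hq i hi' := by unfold bF; rw [dif_neg hio, dif_pos hi']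
  have h2 : bF B hq j = sOf B hq j hj' := by unfold bF; rw [dif_neg hjo, dif_pos hj']
  rw [h1, h2]
  exact sOf_mono hq hi' hj' hij

end Build

lemma avoids_of_incr {n : ℕ} (π : Equiv.Perm (Fin n)) (P : Fin n → Prop)
    (h1 : ∀ i j, i < j → P i → P j → π i < π j)
    (h2 : ∀ i j, i < j → ¬ P i → ¬ P j → π i < π j) : Avoids321 π := by
  rintro ⟨i, j, k, hij, hjk, hkj, hji⟩
  by_cases pi : P i
  · by_cases pj : P j
    · exact absurd (h1 i j hij pi pj) (not_lt.2 (le_of_lt hji))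
    · by_cases pk : P k
      · exact absurd (h1 i k (lt_trans hij hjk) pi pk)
          (not_lt.2 (le_of_lt (lt_trans hkj hji)))
      · exact absurd (h2 j k hjk pj pk) (not_lt.2 (le_of_lt hkj))
  · by_cases pj : P j
    · by_cases pk : P k
      · exact absurd (h1 j k hjk pj pk) (not_lt.2 (le_of_lt hkj))
      · exact absurd (h2 i k (lt_trans hij hjk) pi pk)
          (not_lt.2 (le_of_lt (lt_trans hkj hji)))
    · exact absurd (h2 i j hij pi pj) (not_lt.2 (le_of_lt hji))

theorem exists_avoiding_involution {n : ℕ} {B : Finset (Fin n)} (hB : Ballot B) :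
    ∃ π : Equiv.Perm (Fin n), IsInvolution π ∧ Avoids321 π ∧ exSet π = B := by
  classical
  have hq := Build.op_card hB
  refine ⟨Build.bPerm B hq, Build.bPerm_invol hq, ?_, Build.bPerm_exSet hB hq⟩
  apply avoids_of_incr _ (fun i => i ∈ B)
  · intro i j hij hi hj
    exact Build.incr_on_B hB hq hij hi hj
  · intro i j hij hi hj
    exact Build.incr_on_compl hB hq hij hi hj

/-- The number of 321-avoiding involutions of {1,…,n} is C(n, ⌊n/2⌋). -/
theorem count_involutions_avoiding_321 (n : ℕ) :
    Nat.card {π : Equiv.Perm (Fin n) // IsInvolution π ∧ Avoids321 π} =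
      Nat.choose n (n / 2) := by
  classical
  have hbij : Function.Bijective
      (fun p : {π : Equiv.Perm (Fin n) // IsInvolution π ∧ Avoids321 π} =>
        (⟨exSet p.1, ballot_exSet p.2.1⟩ : {B : Finset (Fin n) // Ballot B})) := by
    constructor
    · rintro ⟨π, hπ⟩ ⟨π', hπ'⟩ h
      simp only [Subtype.mk.injEq] at h
      exact Subtype.ext (exSet_injective hπ.1 hπ'.1 hπ.2 hπ'.2 h)
    · rintro ⟨B, hB⟩
      obtain ⟨π, h1, h2, h3⟩ := exists_avoiding_involution hB
      exact ⟨⟨π, h1, h2⟩, Subtype.ext h3⟩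
  rw [Nat.card_eq_of_bijective _ hbij, Nat.card_eq_fintype_card, Fintype.card_subtype]
  exact ballot_count n
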